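/- arXiv:cs/0609040 — 2 statements merged into one kernel-verified Lean document; each statement's English description precedes it below -/
import Mathlib

section
/- If (TY, τ_Y, (-)†) is a free complete Elgot algebra on Y with universal arrow η_Y : Y → TY, then [τ_Y, η_Y] : HTY + Y → TY is an isomorphism. -/
open CategoryTheory Limits

universe u v

variable {C : Type u} [Category.{v} C] [HasBinaryCoproducts C]

attribute [local simp] coprod.inl_desc coprod.inr_desc coprod.inl_desc_assoc coprod.inr_desc_assoc

/-- `s` is a solution of the flat equation morphism `e : X ⟶ HX + A`. -/
def IsSolution (H : C ⥤ C) {A X : C} (α : H.obj A ⟶ A) (e : X ⟶ H.obj X ⨿ A) (s : X ⟶ A) : Prop :=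
  s = e ≫ coprod.map (H.map s) (𝟙 A) ≫ coprod.desc α (𝟙 A)

/-- `h ▹ e = (id_{HX} + h) ∘ e` : renaming of parameters. -/
noncomputable def afterEq (H : C ⥤ C) {X Y Z : C} (e : X ⟶ H.obj X ⨿ Y) (h : Y ⟶ Z) :
    X ⟶ H.obj X ⨿ Z :=
  e ≫ coprod.map (𝟙 (H.obj X)) h

/-- `f ⊞ e = (can + id_A) ∘ (id_{HX} + f) ∘ [e, inr]`, with
`can = [H inl, H inr] : HX + HY ⟶ H(X+Y)`. -/
noncomputable def plusEq (H : C ⥤ C) {X Y A : C} (e : X ⟶ H.obj X ⨿ Y) (f : Y ⟶ H.obj Y ⨿ A) :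
    X ⨿ Y ⟶ H.obj (X ⨿ Y) ⨿ A :=
  coprod.desc e coprod.inr ≫
    coprod.map (𝟙 (H.obj X)) f ≫
      (coprod.associator (H.obj X) (H.obj Y) A).inv ≫
        coprod.map (coprod.desc (H.map coprod.inl) (H.map coprod.inr)) (𝟙 A)

/-- A complete Elgot algebra for `H`: an `H`-algebra `(A, α)` together with a
choice of solution for every flat equation morphism, satisfying functoriality
and compositionality. -/
structure CompleteElgotStr (H : C ⥤ C) (A : C) (α : H.obj A ⟶ A) where
  sol : ∀ {X : C}, (X ⟶ H.obj X ⨿ A) → (X ⟶ A)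
  isSol : ∀ {X : C} (e : X ⟶ H.obj X ⨿ A), IsSolution H α e (sol e)
  functorial : ∀ {X Y : C} (e : X ⟶ H.obj X ⨿ A) (f : Y ⟶ H.obj Y ⨿ A) (h : X ⟶ Y),
    e ≫ coprod.map (H.map h) (𝟙 A) = h ≫ f → sol e = h ≫ sol f
  compositional : ∀ {X Y : C} (e : X ⟶ H.obj X ⨿ Y) (f : Y ⟶ H.obj Y ⨿ A),
    sol (afterEq H e (sol f)) = coprod.inl ≫ sol (plusEq H e f)

/-- `h : A ⟶ B` preserves solutions: `h ∘ e† = (h ▹ e)‡` for every flat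
equation morphism `e` in `A`. -/
def SolPreserving {H : C ⥤ C} {A B : C} {α : H.obj A ⟶ A} {β : H.obj B ⟶ B}
    (EA : CompleteElgotStr H A α) (EB : CompleteElgotStr H B β) (h : A ⟶ B) : Prop :=
  ∀ (X : C) (e : X ⟶ H.obj X ⨿ A), EA.sol e ≫ h = EB.sol (afterEq H e h)

/-- Solution-preserving morphisms are automatically H-algebra homomorphisms. -/
lemma solPreserving_hom {H : C ⥤ C} {A B : C} {α : H.obj A ⟶ A} {β : H.obj B ⟶ B}
    {EA : CompleteElgotStr H A α} {EB : CompleteElgotStr H B β} {h : A ⟶ B}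
    (hp : SolPreserving EA EB h) : α ≫ h = H.map h ≫ β := by
  set e : H.obj A ⨿ A ⟶ H.obj (H.obj A ⨿ A) ⨿ A :=
    coprod.desc (H.map coprod.inr ≫ coprod.inl) coprod.inr with he
  set sA := EA.sol e with hsA
  set sB := EB.sol (afterEq H e h) with hsB
  have hA : sA = e ≫ coprod.map (H.map sA) (𝟙 A) ≫ coprod.desc α (𝟙 A) := EA.isSol e
  have hinrA : (coprod.inr : A ⟶ H.obj A ⨿ A) ≫ sA = 𝟙 A := by
    conv_lhs => rw [hA]
    simp [he]
  have hinlA : (coprod.inl : H.obj A ⟶ H.obj A ⨿ A) ≫ sA = α := by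
    conv_lhs => rw [hA]
    simp only [he, coprod.inl_desc_assoc, Category.assoc, coprod.inl_map_assoc, coprod.inl_desc]
    rw [← Functor.map_comp_assoc, hinrA, CategoryTheory.Functor.map_id, Category.id_comp]
  have hB : sB = afterEq H e h ≫
      coprod.map (H.map sB) (𝟙 B) ≫ coprod.desc β (𝟙 B) := EB.isSol _
  have hinrB : (coprod.inr : A ⟶ H.obj A ⨿ A) ≫ sB = h := by
    conv_lhs => rw [hB]
    simp [he, afterEq]
  have hinlB : (coprod.inl : H.obj A ⟶ H.obj A ⨿ A) ≫ sB = H.map h ≫ β := by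
    conv_lhs => rw [hB]
    simp only [he, afterEq, coprod.inl_desc_assoc, Category.assoc, coprod.inl_map_assoc,
      coprod.inl_desc, Category.id_comp, coprod.map_desc]
    rw [← Functor.map_comp_assoc, hinrB]
  calc α ≫ h = coprod.inl ≫ sA ≫ h := by rw [← Category.assoc, hinlA]
    _ = coprod.inl ≫ sB := by rw [hsA, hsB, hp]
    _ = H.map h ≫ β := hinlB
section FreeElgot

variable (H : C ⥤ C) {Y TY : C} (τ : H.obj TY ⟶ TY) (E : CompleteElgotStr H TY τ) (η : Y ⟶ TY)

/-- Candidate solution operation on `HTY ⨿ Y`. -/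
noncomputable def solB {X : C} (e : X ⟶ H.obj X ⨿ (H.obj TY ⨿ Y)) : X ⟶ H.obj TY ⨿ Y :=
  e ≫ coprod.desc (H.map (E.sol (afterEq H e (coprod.desc τ η))) ≫ coprod.inl)
    (𝟙 (H.obj TY ⨿ Y))

lemma solB_iota {X : C} (e : X ⟶ H.obj X ⨿ (H.obj TY ⨿ Y)) :
    solB H τ E η e ≫ coprod.desc τ η = E.sol (afterEq H e (coprod.desc τ η)) := by
  set s := E.sol (afterEq H e (coprod.desc τ η)) with hs
  have hS : s = afterEq H e (coprod.desc τ η) ≫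
      coprod.map (H.map s) (𝟙 TY) ≫ coprod.desc τ (𝟙 TY) := E.isSol _
  rw [afterEq] at hS
  conv_rhs => rw [hS]
  unfold solB
  rw [← hs]
  simp only [Category.assoc]
  congr 1
  apply coprod.hom_ext <;> simp

noncomputable def EB : CompleteElgotStr H (H.obj TY ⨿ Y) (H.map (coprod.desc τ η) ≫ coprod.inl) where
  sol := fun {X} e => solB H τ E η e
  isSol := fun {X} e => by
    have key := solB_iota H τ E η e
    show solB H τ E η e = e ≫ coprod.map (H.map (solB H τ E η e)) (𝟙 _) ≫
      coprod.desc (H.map (coprod.desc τ η) ≫ coprod.inl) (𝟙 _)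
    conv_lhs => unfold solB
    congr 1
    apply coprod.hom_ext
    · simp only [coprod.inl_desc, coprod.inl_map_assoc, Category.assoc]
      rw [← key]
      simp
    · simp
  functorial := fun {X Y'} e f k hyp => by
    have hafter : afterEq H e (coprod.desc τ η) ≫ coprod.map (H.map k) (𝟙 TY)
        = k ≫ afterEq H f (coprod.desc τ η) := by
      calc afterEq H e (coprod.desc τ η) ≫ coprod.map (H.map k) (𝟙 TY)
          = (e ≫ coprod.map (H.map k) (𝟙 (H.obj TY ⨿ Y))) ≫
              coprod.map (𝟙 (H.obj Y')) (coprod.desc τ η) := by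
            simp [afterEq, coprod.map_map]
        _ = k ≫ afterEq H f (coprod.desc τ η) := by rw [hyp]; simp [afterEq]
    have hsol := E.functorial _ _ k hafter
    show solB H τ E η e = k ≫ solB H τ E η f
    unfold solB
    rw [hsol]
    calc e ≫ coprod.desc (H.map (k ≫ E.sol (afterEq H f (coprod.desc τ η))) ≫ coprod.inl) (𝟙 _)
        = (e ≫ coprod.map (H.map k) (𝟙 (H.obj TY ⨿ Y))) ≫
            coprod.desc (H.map (E.sol (afterEq H f (coprod.desc τ η))) ≫ coprod.inl) (𝟙 _) := by
          simp [coprod.map_desc, Functor.map_comp]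
      _ = k ≫ f ≫ coprod.desc (H.map (E.sol (afterEq H f (coprod.desc τ η))) ≫ coprod.inl)
            (𝟙 _) := by rw [hyp]; simp
  compositional := fun {X Y'} e f => by
    set sf := solB H τ E η f with hsf
    have hsfι : sf ≫ coprod.desc τ η = E.sol (afterEq H f (coprod.desc τ η)) :=
      solB_iota H τ E η f
    have ha : afterEq H (afterEq H e sf) (coprod.desc τ η)
        = afterEq H e (E.sol (afterEq H f (coprod.desc τ η))) := by
      rw [← hsfι]
      unfold afterEq
      simp [coprod.map_map]
    have hfr : E.sol (afterEq H f (coprod.desc τ η)) = coprod.inr ≫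
        E.sol (plusEq H e (afterEq H f (coprod.desc τ η))) := by
      apply E.functorial
      unfold afterEq plusEq
      simp only [Category.assoc, coprod.inr_desc_assoc, coprod.inr_map_assoc]
      congr 1
      apply coprod.hom_ext <;> simp [coprod.map_map]
    have hb : afterEq H (plusEq H e f) (coprod.desc τ η)
        = plusEq H e (afterEq H f (coprod.desc τ η)) := by
      unfold afterEq plusEq
      simp only [Category.assoc]
      congr 1
      apply coprod.hom_ext <;> simp
    have hcomp := E.compositional e (afterEq H f (coprod.desc τ η))
    show solB H τ E η (afterEq H e sf) = coprod.inl ≫ solB H τ E η (plusEq H e f)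
    unfold solB
    rw [ha, hcomp, hb]
    set sp := E.sol (plusEq H e (afterEq H f (coprod.desc τ η))) with hsp
    unfold afterEq plusEq
    simp only [Category.assoc, coprod.inl_desc_assoc]
    congr 1
    apply coprod.hom_ext
    · simp [Functor.map_comp]
    · simp only [coprod.inr_map_assoc, coprod.inr_desc, Category.comp_id, Category.id_comp,
        coprod.inr_desc_assoc]
      rw [hsf]
      unfold solB
      rw [hfr]
      congr 1
      apply coprod.hom_ext <;> simp [Functor.map_comp]

end FreeElgot

lemma solPreserving_id {H : C ⥤ C} {A : C} {α : H.obj A ⟶ A} (EA : CompleteElgotStr H A α) :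
    SolPreserving EA EA (𝟙 A) := fun X e => by
  simp [afterEq]

/-- If `(TY, τ, †)` is a free complete Elgot algebra on `Y` with universal arrow
`η : Y ⟶ TY`, then `[τ, η] : HTY + Y ⟶ TY` is an isomorphism. -/
theorem free_elgot_algebra_iso (H : C ⥤ C) {Y TY : C}
    (τ : H.obj TY ⟶ TY) (E : CompleteElgotStr H TY τ) (η : Y ⟶ TY)
    (free : ∀ (A : C) (α : H.obj A ⟶ A) (EA : CompleteElgotStr H A α) (m : Y ⟶ A),
      ∃! h : TY ⟶ A, SolPreserving E EA h ∧ η ≫ h = m) :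
    IsIso (coprod.desc τ η) := by
  obtain ⟨h, ⟨hsp, hη⟩, -⟩ := free (H.obj TY ⨿ Y) (H.map (coprod.desc τ η) ≫ coprod.inl)
    (EB H τ E η) coprod.inr
  obtain ⟨k, -, hku⟩ := free TY τ E η
  have hιsp : SolPreserving (EB H τ E η) E (coprod.desc τ η) := fun X e => solB_iota H τ E η e
  have hcsp : SolPreserving E E (h ≫ coprod.desc τ η) := fun X e => by
    rw [← Category.assoc, hsp X e, hιsp X (afterEq H e h)]
    have : afterEq H (afterEq H e h) (coprod.desc τ η)
        = afterEq H e (h ≫ coprod.desc τ η) := by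
      unfold afterEq
      simp [coprod.map_map]
    rw [this]
  have h1 : h ≫ coprod.desc τ η = 𝟙 TY := by
    have e1 := hku (h ≫ coprod.desc τ η) ⟨hcsp, by rw [← Category.assoc, hη]; simp⟩
    have e2 := hku (𝟙 TY) ⟨solPreserving_id E, Category.comp_id η⟩
    rw [e1, e2]
  have hhom : τ ≫ h = H.map h ≫ H.map (coprod.desc τ η) ≫ coprod.inl := solPreserving_hom hsp
  have h2 : coprod.desc τ η ≫ h = 𝟙 (H.obj TY ⨿ Y) := by
    apply coprod.hom_ext
    · rw [coprod.inl_desc_assoc, hhom, ← Functor.map_comp_assoc, h1,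
        CategoryTheory.Functor.map_id, Category.id_comp]
      simp
    · rw [coprod.inr_desc_assoc, hη]
      simp
  exact ⟨h, h2, h1⟩
end

section
/- Every complete lattice A is a complete Elgot algebra for the Set functor HX = X × X: defining α : TA → A to send a (possibly infinite) binary tree with leaves labelled in A to the join of all its leaf labels, and assigning to each flat equation morphism e : X → X × X + A the map α ∘ ê, where ê is the unique solution of e in the free completely iterative algebra TA of all binary trees over A, yields a choice of solutions satisfying functoriality and compositionality. -/
/-- The polynomial functor whose final-coalgebra construction gives all (finite
and infinite) binary trees with leaves labelled in `A`:
`X ↦ (X × X) ⊕ A`. -/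
def treeP (A : Type) : PFunctor.{0} :=
  ⟨Unit ⊕ A, fun s => match s with | .inl _ => Bool | .inr _ => Empty⟩

/-- The type of all (finite and infinite) binary trees with leaves labelled
in `A`: the final coalgebra `TA` for `H(-) + A`, `H X = X × X`. -/
def BTree (A : Type) : Type := (treeP A).M

/-- The coalgebra structure corresponding to a flat equation morphism
`e : X → (X × X) ⊕ A`. -/
def treeStep {A X : Type} (e : X → (X × X) ⊕ A) (x : X) : (treeP A).Obj X :=
  match e x with
  | .inl p => ⟨.inl (), fun (b : Bool) => if b then p.1 else p.2⟩
  | .inr a => ⟨.inr a, Empty.elim⟩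

/-- `treeSol e : X → TA` is the unique solution `ê` of the flat equation
morphism `e` in the free completely iterative algebra `TA` of binary trees:
the unique homomorphism into the final coalgebra. -/
def treeSol {A X : Type} (e : X → (X × X) ⊕ A) : X → BTree A :=
  PFunctor.M.corec (treeStep e)

/-- `IsLeaf t a` : `a` is the label of some leaf of the binary tree `t`. -/
inductive IsLeaf {A : Type} : BTree A → A → Prop
  | leaf (t : BTree A) (a : A) : (PFunctor.M.dest t).fst = Sum.inr a → IsLeaf t a
  | node (t : BTree A) (a : A) (b : (treeP A).B (PFunctor.M.dest t).fst) :
      IsLeaf ((PFunctor.M.dest t).snd b) a → IsLeaf t a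

/-- The combined flat equation morphism `f ⊞ e : X ⊕ Y → ((X ⊕ Y) × (X ⊕ Y)) ⊕ A`
for `H X = X × X` on `Set`. -/
def prodPlus {X Y A : Type} (e : X → (X × X) ⊕ Y) (f : Y → (Y × Y) ⊕ A) :
    X ⊕ Y → ((X ⊕ Y) × (X ⊕ Y)) ⊕ A :=
  Sum.elim
    (fun x => Sum.elim (fun p => Sum.inl (Sum.inl p.1, Sum.inl p.2))
      (fun y => Sum.map (Prod.map Sum.inr Sum.inr) id (f y)) (e x))
    (fun y => Sum.map (Prod.map Sum.inr Sum.inr) id (f y))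

inductive Reach {X A : Type} (e : X → (X × X) ⊕ A) : X → A → Prop
  | leaf (x : X) (a : A) : e x = .inr a → Reach e x a
  | left (x : X) (p : X × X) (a : A) : e x = .inl p → Reach e p.1 a → Reach e x a
  | right (x : X) (p : X × X) (a : A) : e x = .inl p → Reach e p.2 a → Reach e x a

lemma treeStep_inl {A X : Type} {e : X → (X × X) ⊕ A} {x : X} {p : X × X}
    (hx : e x = .inl p) :
    treeStep e x = ⟨Sum.inl (), fun b : Bool => if b then p.1 else p.2⟩ := by
  unfold treeStep; rw [hx]

lemma treeStep_inr {A X : Type} {e : X → (X × X) ⊕ A} {x : X} {a : A}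
    (hx : e x = .inr a) : treeStep e x = ⟨Sum.inr a, Empty.elim⟩ := by
  unfold treeStep; rw [hx]

lemma dest_treeSol_inl {A X : Type} {e : X → (X × X) ⊕ A} {x : X} {p : X × X}
    (hx : e x = .inl p) :
    PFunctor.M.dest (treeSol e x) =
      ⟨Sum.inl (), fun b : Bool => treeSol e (if b then p.1 else p.2)⟩ := by
  show PFunctor.M.dest (PFunctor.M.corec (treeStep e) x) = _
  rw [PFunctor.M.dest_corec, treeStep_inl hx]
  rfl

lemma dest_treeSol_inr {A X : Type} {e : X → (X × X) ⊕ A} {x : X} {a : A}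
    (hx : e x = .inr a) :
    PFunctor.M.dest (treeSol e x) =
      ⟨Sum.inr a, fun b => treeSol e (Empty.elim b)⟩ := by
  show PFunctor.M.dest (PFunctor.M.corec (treeStep e) x) = _
  rw [PFunctor.M.dest_corec, treeStep_inr hx]
  rfl

lemma isLeaf_node' {A : Type} (t : BTree A) (a : A) {u : Unit ⊕ A}
    {g : (treeP A).B u → BTree A} (h : PFunctor.M.dest t = ⟨u, g⟩)
    (b : (treeP A).B u) (hl : IsLeaf (g b) a) : IsLeaf t a := by
  have hn := IsLeaf.node t a
  rw [h] at hn
  exact hn b hl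

lemma reach_of_isLeaf {A X : Type} (e : X → (X × X) ⊕ A) (t : BTree A) (a : A)
    (h : IsLeaf t a) : ∀ x : X, t = treeSol e x → Reach e x a := by
  induction h with
  | leaf t a ha =>
    intro x ht; subst ht
    cases hx : e x with
    | inl p => rw [dest_treeSol_inl hx] at ha; cases ha
    | inr a' =>
      rw [dest_treeSol_inr hx] at ha
      cases Sum.inr.inj ha
      exact Reach.leaf x a hx
  | node t a b hl ih =>
    intro x ht; subst ht
    cases hx : e x with
    | inr a' =>
      exfalso
      revert b
      rw [dest_treeSol_inr hx]
      intro b _ _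
      exact b.elim
    | inl p =>
      revert b
      rw [dest_treeSol_inl hx]
      intro b hl ih
      cases b with
      | true => exact Reach.left x p a hx (ih p.1 rfl)
      | false => exact Reach.right x p a hx (ih p.2 rfl)

lemma isLeaf_of_reach {A X : Type} (e : X → (X × X) ⊕ A) {x : X} {a : A}
    (h : Reach e x a) : IsLeaf (treeSol e x) a := by
  induction h with
  | leaf x a hx =>
    exact IsLeaf.leaf _ a (by rw [dest_treeSol_inr hx])
  | left x p a hx _ ih =>
    exact isLeaf_node' _ a (dest_treeSol_inl hx) true (by simpa using ih)
  | right x p a hx _ ih =>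
    exact isLeaf_node' _ a (dest_treeSol_inl hx) false (by simpa using ih)

lemma isLeaf_iff_reach {A X : Type} (e : X → (X × X) ⊕ A) (x : X) (a : A) :
    IsLeaf (treeSol e x) a ↔ Reach e x a :=
  ⟨fun h => reach_of_isLeaf e _ a h x rfl, isLeaf_of_reach e⟩


lemma reach_congr {X A : Type} (g : X → (X × X) ⊕ A) {s s' : X}
    (h : g s = g s') {a : A} (hr : Reach g s' a) : Reach g s a := by
  cases hr with
  | leaf _ _ h' => exact .leaf _ _ (h.trans h')
  | left _ p _ h' hr' => exact .left _ p _ (h.trans h') hr'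
  | right _ p _ h' hr' => exact .right _ p _ (h.trans h') hr'

section
variable {X Y A : Type} (e : X → (X × X) ⊕ Y) (f : Y → (Y × Y) ⊕ A)

lemma prodPlus_inl_inl {x : X} {p : X × X} (hx : e x = .inl p) :
    prodPlus e f (Sum.inl x) = .inl (Sum.inl p.1, Sum.inl p.2) := by
  simp [prodPlus, hx]

lemma prodPlus_inl_inr {x : X} {y : Y} (hx : e x = .inr y) :
    prodPlus e f (Sum.inl x) = Sum.map (Prod.map Sum.inr Sum.inr) id (f y) := by
  simp [prodPlus, hx]

lemma prodPlus_inr (y : Y) :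
    prodPlus e f (Sum.inr y) = Sum.map (Prod.map Sum.inr Sum.inr) id (f y) := rfl

lemma reach_prodPlus_of_reach {y : Y} {a : A} (h : Reach f y a) :
    Reach (prodPlus e f) (Sum.inr y) a := by
  induction h with
  | leaf y a hy =>
    exact .leaf _ a (by rw [prodPlus_inr, hy]; rfl)
  | left y q a hy _ ih =>
    exact .left _ (Sum.inr q.1, Sum.inr q.2) a (by rw [prodPlus_inr, hy]; rfl) ih
  | right y q a hy _ ih =>
    exact .right _ (Sum.inr q.1, Sum.inr q.2) a (by rw [prodPlus_inr, hy]; rfl) ih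

lemma reach_of_reach_prodPlus_inr {s : X ⊕ Y} {a : A}
    (h : Reach (prodPlus e f) s a) : ∀ y : Y, s = Sum.inr y → Reach f y a := by
  induction h with
  | leaf s a hs =>
    rintro y rfl
    rw [prodPlus_inr] at hs
    cases hy : f y with
    | inl q => rw [hy] at hs; cases hs
    | inr a' =>
      rw [hy] at hs
      obtain rfl : a' = a := Sum.inr.inj hs
      exact .leaf y _ hy
  | left s q a hs _ ih =>
    rintro y rfl
    rw [prodPlus_inr] at hs
    cases hy : f y with
    | inr a' => rw [hy] at hs; cases hs
    | inl q' =>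
      rw [hy] at hs
      cases hs
      exact .left y q' a hy (ih q'.1 rfl)
  | right s q a hs _ ih =>
    rintro y rfl
    rw [prodPlus_inr] at hs
    cases hy : f y with
    | inr a' => rw [hy] at hs; cases hs
    | inl q' =>
      rw [hy] at hs
      cases hs
      exact .right y q' a hy (ih q'.2 rfl)

lemma reach_prodPlus_inr_iff (y : Y) (a : A) :
    Reach (prodPlus e f) (Sum.inr y) a ↔ Reach f y a :=
  ⟨fun h => reach_of_reach_prodPlus_inr e f h y rfl, reach_prodPlus_of_reach e f⟩

lemma reach_prodPlus_inl_of {x : X} {y : Y} (hxy : Reach e x y) :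
    ∀ a : A, Reach f y a → Reach (prodPlus e f) (Sum.inl x) a := by
  induction hxy with
  | leaf x y hx =>
    intro a hf
    exact reach_congr _ ((prodPlus_inl_inr e f hx).trans (prodPlus_inr e f y).symm)
      (reach_prodPlus_of_reach e f hf)
  | left x p y hx _ ih =>
    intro a hf
    exact .left _ (Sum.inl p.1, Sum.inl p.2) a (prodPlus_inl_inl e f hx) (ih a hf)
  | right x p y hx _ ih =>
    intro a hf
    exact .right _ (Sum.inl p.1, Sum.inl p.2) a (prodPlus_inl_inl e f hx) (ih a hf)

lemma reach_prodPlus_inl_elim {s : X ⊕ Y} {a : A}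
    (h : Reach (prodPlus e f) s a) :
    ∀ x : X, s = Sum.inl x → ∃ y, Reach e x y ∧ Reach f y a := by
  induction h with
  | leaf s a hs =>
    rintro x rfl
    cases hx : e x with
    | inl p => rw [prodPlus_inl_inl e f hx] at hs; cases hs
    | inr y =>
      rw [prodPlus_inl_inr e f hx] at hs
      cases hy : f y with
      | inl q => rw [hy] at hs; cases hs
      | inr a' =>
        rw [hy] at hs
        obtain rfl : a' = a := Sum.inr.inj hs
        exact ⟨y, .leaf x y hx, .leaf y _ hy⟩
  | left s q a hs hr ih =>
    rintro x rfl
    cases hx : e x with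
    | inl p =>
      rw [prodPlus_inl_inl e f hx] at hs
      cases hs
      obtain ⟨y, h1, h2⟩ := ih p.1 rfl
      exact ⟨y, .left x p y hx h1, h2⟩
    | inr y0 =>
      rw [prodPlus_inl_inr e f hx] at hs
      cases hy : f y0 with
      | inr a' => rw [hy] at hs; cases hs
      | inl q0 =>
        rw [hy] at hs
        cases hs
        have := reach_of_reach_prodPlus_inr e f hr q0.1 rfl
        exact ⟨y0, .leaf x y0 hx, .left y0 q0 a hy this⟩
  | right s q a hs hr ih =>
    rintro x rfl
    cases hx : e x with
    | inl p =>
      rw [prodPlus_inl_inl e f hx] at hs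
      cases hs
      obtain ⟨y, h1, h2⟩ := ih p.2 rfl
      exact ⟨y, .right x p y hx h1, h2⟩
    | inr y0 =>
      rw [prodPlus_inl_inr e f hx] at hs
      cases hy : f y0 with
      | inr a' => rw [hy] at hs; cases hs
      | inl q0 =>
        rw [hy] at hs
        cases hs
        have := reach_of_reach_prodPlus_inr e f hr q0.2 rfl
        exact ⟨y0, .leaf x y0 hx, .right y0 q0 a hy this⟩

lemma reach_prodPlus_inl_iff (x : X) (a : A) :
    Reach (prodPlus e f) (Sum.inl x) a ↔ ∃ y, Reach e x y ∧ Reach f y a :=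
  ⟨fun h => reach_prodPlus_inl_elim e f h x rfl,
   fun ⟨_, h1, h2⟩ => reach_prodPlus_inl_of e f h1 _ h2⟩

end

section
variable {X Y A : Type}

lemma reach_map {e : X → (X × X) ⊕ A} {f : Y → (Y × Y) ⊕ A} {h : X → Y}
    (hc : ∀ x, Sum.map (Prod.map h h) id (e x) = f (h x)) {x : X} {a : A}
    (hr : Reach e x a) : Reach f (h x) a := by
  induction hr with
  | leaf x a hx =>
    have := hc x; rw [hx] at this
    exact .leaf _ a this.symm
  | left x p a hx _ ih =>
    have := hc x; rw [hx] at this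
    exact .left _ (h p.1, h p.2) a this.symm ih
  | right x p a hx _ ih =>
    have := hc x; rw [hx] at this
    exact .right _ (h p.1, h p.2) a this.symm ih

lemma reach_unmap {e : X → (X × X) ⊕ A} {f : Y → (Y × Y) ⊕ A} {h : X → Y}
    (hc : ∀ x, Sum.map (Prod.map h h) id (e x) = f (h x)) {y : Y} {a : A}
    (hr : Reach f y a) : ∀ x : X, h x = y → Reach e x a := by
  induction hr with
  | leaf y a hy =>
    rintro x rfl
    have := hc x; rw [hy] at this
    cases hx : e x with
    | inl p => rw [hx] at this; cases this
    | inr a' =>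
      rw [hx] at this
      obtain rfl : a' = a := Sum.inr.inj this
      exact .leaf x _ hx
  | left y q a hy _ ih =>
    rintro x rfl
    have := hc x; rw [hy] at this
    cases hx : e x with
    | inr a' => rw [hx] at this; cases this
    | inl p =>
      rw [hx] at this
      have hq := Sum.inl.inj this
      exact .left x p a hx (ih p.1 (congrArg Prod.fst hq))
  | right y q a hy _ ih =>
    rintro x rfl
    have := hc x; rw [hy] at this
    cases hx : e x with
    | inr a' => rw [hx] at this; cases this
    | inl p =>
      rw [hx] at this
      have hq := Sum.inl.inj this
      exact .right x p a hx (ih p.2 (congrArg Prod.snd hq))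

-- Reach through (Sum.map id g ∘ e):
lemma reach_mapRight {e : X → (X × X) ⊕ Y} {g : Y → A} {x : X} {a : A}
    (hr : Reach (fun x' => Sum.map id g (e x')) x a) :
    ∃ y, Reach e x y ∧ a = g y := by
  induction hr with
  | leaf x a hx =>
    cases he : e x with
    | inl p => rw [he] at hx; cases hx
    | inr y =>
      rw [he] at hx
      exact ⟨y, .leaf x y he, (Sum.inr.inj hx).symm⟩
  | left x p a hx _ ih =>
    cases he : e x with
    | inr y => rw [he] at hx; cases hx
    | inl p' =>
      rw [he] at hx
      obtain rfl : p' = p := Sum.inl.inj hx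
      obtain ⟨y, h1, h2⟩ := ih
      exact ⟨y, .left x p' y he h1, h2⟩
  | right x p a hx _ ih =>
    cases he : e x with
    | inr y => rw [he] at hx; cases hx
    | inl p' =>
      rw [he] at hx
      obtain rfl : p' = p := Sum.inl.inj hx
      obtain ⟨y, h1, h2⟩ := ih
      exact ⟨y, .right x p' y he h1, h2⟩

lemma reach_mapRight' {e : X → (X × X) ⊕ Y} {g : Y → A} {x : X} {y : Y}
    (hr : Reach e x y) : Reach (fun x' => Sum.map id g (e x')) x (g y) := by
  induction hr with
  | leaf x y hx => exact .leaf x (g y) (by simp [hx])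
  | left x p y hx _ ih => exact .left x p (g y) (by simp [hx]) ih
  | right x p y hx _ ih => exact .right x p (g y) (by simp [hx]) ih

end


/-- A complete Elgot algebra structure on the algebra `(A, α)` for
`H X = X × X` on `Set`: chosen solutions of all flat equation morphisms,
satisfying functoriality and compositionality. -/
structure ProdCompleteElgot (A : Type) (α : A × A → A) where
  sol : ∀ (X : Type), (X → (X × X) ⊕ A) → (X → A)
  isSol : ∀ (X : Type) (e : X → (X × X) ⊕ A) (x : X),
    sol X e x = Sum.elim (fun p => α (sol X e p.1, sol X e p.2)) id (e x)
  functorial : ∀ (X Y : Type) (e : X → (X × X) ⊕ A) (f : Y → (Y × Y) ⊕ A)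
    (h : X → Y), (∀ x, Sum.map (Prod.map h h) id (e x) = f (h x)) →
      ∀ x, sol X e x = sol Y f (h x)
  compositional : ∀ (X Y : Type) (e : X → (X × X) ⊕ Y) (f : Y → (Y × Y) ⊕ A)
    (x : X),
    sol X (fun x' => Sum.map id (sol Y f) (e x')) x =
      sol (X ⊕ Y) (prodPlus e f) (Sum.inl x)

/-- Every complete lattice `A` is a complete Elgot algebra for `H X = X × X` on
`Set`, with algebra map the binary join, where the solution of a flat equation
morphism `e` at `x` is `α ∘ ê`: the join of all leaf labels of the binary tree
`ê x ∈ TA`, `ê` being the unique solution of `e` in the free completely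
iterative algebra `TA` of all binary trees over `A`. -/
theorem completeLattice_complete_elgot {A : Type} [CompleteLattice A] :
    ∃ E : ProdCompleteElgot A (fun p => p.1 ⊔ p.2),
      ∀ (X : Type) (e : X → (X × X) ⊕ A) (x : X),
        E.sol X e x = sSup {a | IsLeaf (treeSol e x) a} := by

  refine ⟨{ sol := fun X e x => sSup {a | Reach e x a}
            isSol := ?_
            functorial := ?_
            compositional := ?_ }, ?_⟩
  · intro X e x
    cases hx : e x with
    | inr a =>
      show sSup {a' | Reach e x a'} = Sum.elim _ id (Sum.inr a)
      simp only [Sum.elim_inr, id]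
      have hset : {a' | Reach e x a'} = {a} := by
        ext a'
        constructor
        · intro h
          cases h with
          | leaf _ _ h' => exact (Sum.inr.inj (hx.symm.trans h')).symm
          | left _ _ _ h' _ => rw [hx] at h'; cases h'
          | right _ _ _ h' _ => rw [hx] at h'; cases h'
        · rintro rfl
          exact .leaf x _ hx
      rw [hset, sSup_singleton]
    | inl p =>
      show sSup {a | Reach e x a} =
        Sum.elim (fun q => sSup {a | Reach e q.1 a} ⊔ sSup {a | Reach e q.2 a}) id (Sum.inl p)
      simp only [Sum.elim_inl]
      have hset : {a | Reach e x a} = {a | Reach e p.1 a} ∪ {a | Reach e p.2 a} := by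
        ext a
        constructor
        · intro h
          cases h with
          | leaf _ _ h' => rw [hx] at h'; cases h'
          | left _ p' _ h' hr =>
            obtain rfl : p' = p := Sum.inl.inj (h'.symm.trans hx)
            exact Or.inl hr
          | right _ p' _ h' hr =>
            obtain rfl : p' = p := Sum.inl.inj (h'.symm.trans hx)
            exact Or.inr hr
        · rintro (h | h)
          · exact .left x p a hx h
          · exact .right x p a hx h
      rw [hset, sSup_union]
  · intro X Y e f h hc x
    refine congrArg sSup (Set.ext fun a => ⟨fun hr => reach_map hc hr,
      fun hr => reach_unmap hc hr x rfl⟩)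
  · intro X Y e f x
    apply le_antisymm
    · refine sSup_le fun a ha => ?_
      obtain ⟨y, hy, rfl⟩ := reach_mapRight ha
      refine sSup_le fun b hb => le_sSup ?_
      exact reach_prodPlus_inl_of e f hy b hb
    · refine sSup_le fun a ha => ?_
      obtain ⟨y, h1, h2⟩ := reach_prodPlus_inl_elim e f ha x rfl
      exact le_trans (le_sSup h2) (le_sSup (reach_mapRight' h1))
  · intro X e x
    exact congrArg sSup (Set.ext fun a => (isLeaf_iff_reach e x a).symm)
end
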